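/- Block-triangular truncation in spectral norm: for block matrices with $m$ block-rows/columns, $\|\mathcal{U}_b(M)\|_2 \le (\lceil\log_2 m\rceil + 1)\|M\|_2$ for all $M\in\mathbb{R}^{n\times n}$, where $\mathcal{U}_b$ is the block-upper-triangular truncation and $\|\cdot\|_2$ the spectral norm. -/

import Mathlib

open Matrix Finset

/-- The spectral (ℓ²-operator) norm of a real matrix. -/
noncomputable def specNorm {m n : ℕ} (M : Matrix (Fin m) (Fin n) ℝ) : ℝ :=
  ‖LinearMap.toContinuousLinearMap (Matrix.toEuclideanLin M)‖

/-- Block index of a row/column index `i` with respect to the block structure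
`nb 0 = 0 < nb 1 < ⋯ < nb m = n`: the largest `j ≤ m` with `nb j ≤ i`. -/
def blockOf {n : ℕ} (nb : ℕ → ℕ) (m : ℕ) (i : Fin n) : ℕ :=
  Nat.findGreatest (fun j => nb j ≤ i.1) m

/-- Block-upper-triangular truncation: zero out all blocks strictly below the block
diagonal. -/
def triuB {n : ℕ} (nb : ℕ → ℕ) (m : ℕ) (M : Matrix (Fin n) (Fin n) ℝ) :
    Matrix (Fin n) (Fin n) ℝ :=
  Matrix.of fun i k => if blockOf nb m i ≤ blockOf nb m k then M i k else 0

/-! ### Auxiliary lemmas on the spectral norm -/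

lemma specNorm_nonneg' {n : ℕ} (M : Matrix (Fin n) (Fin n) ℝ) : 0 ≤ specNorm M :=
  norm_nonneg _

lemma euclid_norm_eq {n : ℕ} (y : Fin n → ℝ) :
    ‖(WithLp.equiv 2 (Fin n → ℝ)).symm y‖ = Real.sqrt (∑ k, (y k)^2) := by
  rw [EuclideanSpace.norm_eq]
  congr 1
  apply Finset.sum_congr rfl
  intro k _
  rw [Real.norm_eq_abs, sq_abs]
  rfl

lemma clm_apply_eq {n : ℕ} (M : Matrix (Fin n) (Fin n) ℝ) (y : Fin n → ℝ) :
    (LinearMap.toContinuousLinearMap (Matrix.toEuclideanLin M))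
      ((WithLp.equiv 2 (Fin n → ℝ)).symm y) = (WithLp.equiv 2 (Fin n → ℝ)).symm (M.mulVec y) := by
  simp [LinearMap.coe_toContinuousLinearMap]

lemma mulVec_norm_le {n : ℕ} (M : Matrix (Fin n) (Fin n) ℝ) (y : Fin n → ℝ) :
    Real.sqrt (∑ i, (M.mulVec y i)^2) ≤ specNorm M * Real.sqrt (∑ k, (y k)^2) := by
  have h := (LinearMap.toContinuousLinearMap (Matrix.toEuclideanLin M)).le_opNorm
    ((WithLp.equiv 2 (Fin n → ℝ)).symm y)
  rwa [euclid_norm_eq, clm_apply_eq, euclid_norm_eq] at h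

lemma specNorm_le_bound {n : ℕ} (M : Matrix (Fin n) (Fin n) ℝ) (C : ℝ) (hC : 0 ≤ C)
    (h : ∀ y : Fin n → ℝ, Real.sqrt (∑ i, (M.mulVec y i)^2) ≤ C * Real.sqrt (∑ k, (y k)^2)) :
    specNorm M ≤ C := by
  apply ContinuousLinearMap.opNorm_le_bound _ hC
  intro x
  have hx := h ((WithLp.equiv 2 (Fin n → ℝ)) x)
  rw [← euclid_norm_eq, ← euclid_norm_eq, Equiv.symm_apply_apply] at hx
  have he : (LinearMap.toContinuousLinearMap (Matrix.toEuclideanLin M)) x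
      = (WithLp.equiv 2 (Fin n → ℝ)).symm (M.mulVec ((WithLp.equiv 2 (Fin n → ℝ)) x)) := by
    simp [LinearMap.coe_toContinuousLinearMap, Matrix.toEuclideanLin_apply]
  rw [he]; exact hx

lemma specNorm_sum_le {n : ℕ} {ι : Type*} (s : Finset ι) (A : ι → Matrix (Fin n) (Fin n) ℝ) :
    specNorm (∑ l ∈ s, A l) ≤ ∑ l ∈ s, specNorm (A l) := by
  unfold specNorm
  rw [map_sum, map_sum]
  exact norm_sum_le _ _

/-- Masking a matrix by the pattern `φ i = ψ k` (a block-diagonal compression)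
does not increase the spectral norm. -/
lemma specNorm_mask_le {n : ℕ} (φ ψ : Fin n → ℕ) (M : Matrix (Fin n) (Fin n) ℝ) :
    specNorm (Matrix.of fun i k => if φ i = ψ k then M i k else 0) ≤ specNorm M := by
  apply specNorm_le_bound _ _ (specNorm_nonneg' M)
  intro y
  set A : Matrix (Fin n) (Fin n) ℝ := Matrix.of fun i k => if φ i = ψ k then M i k else 0 with hA
  set xm : ℕ → (Fin n → ℝ) := fun c k => if ψ k = c then y k else 0 with hxm
  have key1 : ∀ i, A.mulVec y i = M.mulVec (xm (φ i)) i := by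
    intro i
    simp only [Matrix.mulVec, dotProduct, hA, Matrix.of_apply, hxm]
    refine Finset.sum_congr rfl fun k _ => ?_
    by_cases h : φ i = ψ k
    · simp [h]
    · rw [if_neg h, if_neg (fun h' => h h'.symm), zero_mul, mul_zero]
  set C := Finset.image φ Finset.univ with hC
  set S := specNorm M with hS
  have hS0 : 0 ≤ S := specNorm_nonneg' M
  have fiber_bound : ∀ c, ∑ i, (M.mulVec (xm c) i)^2 ≤ S^2 * ∑ k, (xm c k)^2 := by
    intro c
    have h := mulVec_norm_le M (xm c)
    have h1 : 0 ≤ ∑ i, (M.mulVec (xm c) i)^2 := Finset.sum_nonneg fun i _ => sq_nonneg _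
    have h2 : 0 ≤ ∑ k, (xm c k)^2 := Finset.sum_nonneg fun k _ => sq_nonneg _
    nlinarith [Real.sq_sqrt h1, Real.sq_sqrt h2, Real.sqrt_nonneg (∑ i, (M.mulVec (xm c) i)^2),
      Real.sqrt_nonneg (∑ k, (xm c k)^2)]
  have main : ∑ i, (A.mulVec y i)^2 ≤ S^2 * ∑ k, (y k)^2 := by
    calc ∑ i, (A.mulVec y i)^2 = ∑ i, (M.mulVec (xm (φ i)) i)^2 :=
          Finset.sum_congr rfl fun i _ => by rw [key1]
      _ = ∑ c ∈ C, ∑ i ∈ Finset.univ.filter (fun i => φ i = c), (M.mulVec (xm (φ i)) i)^2 := by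
          rw [Finset.sum_fiberwise_of_maps_to (fun i _ => Finset.mem_image_of_mem φ (Finset.mem_univ i))]
      _ = ∑ c ∈ C, ∑ i ∈ Finset.univ.filter (fun i => φ i = c), (M.mulVec (xm c) i)^2 := by
          refine Finset.sum_congr rfl fun c _ => Finset.sum_congr rfl fun i hi => ?_
          rw [(Finset.mem_filter.mp hi).2]
      _ ≤ ∑ c ∈ C, ∑ i, (M.mulVec (xm c) i)^2 :=
          Finset.sum_le_sum fun c _ => Finset.sum_le_sum_of_subset_of_nonneg
            (Finset.filter_subset _ _) (fun i _ _ => sq_nonneg _)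
      _ ≤ ∑ c ∈ C, S^2 * ∑ k, (xm c k)^2 := Finset.sum_le_sum fun c _ => fiber_bound c
      _ = S^2 * ∑ k, ∑ c ∈ C, (xm c k)^2 := by rw [← Finset.mul_sum, Finset.sum_comm]
      _ ≤ S^2 * ∑ k, (y k)^2 := by
          refine mul_le_mul_of_nonneg_left (Finset.sum_le_sum fun k _ => ?_) (sq_nonneg S)
          have h1 : ∑ c ∈ C, (xm c k)^2 = ∑ c ∈ C, (if c = ψ k then (y k)^2 else 0) := by
            refine Finset.sum_congr rfl fun c _ => ?_
            simp only [hxm]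
            by_cases h : ψ k = c
            · rw [if_pos h, if_pos h.symm]
            · rw [if_neg h, if_neg (fun h' => h h'.symm)]
              simp
          rw [h1, Finset.sum_ite_eq' C (ψ k) (fun _ => (y k)^2)]
          split
          · exact le_refl _
          · exact sq_nonneg _
  calc Real.sqrt (∑ i, (A.mulVec y i)^2) ≤ Real.sqrt (S^2 * ∑ k, (y k)^2) := Real.sqrt_le_sqrt main
    _ = S * Real.sqrt (∑ k, (y k)^2) := by
        rw [Real.sqrt_mul (sq_nonneg S), Real.sqrt_sq hS0]

/-! ### The dyadic level functions -/

def fm : ℕ → ℕ → ℕ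
  | 0, a => 3*a
  | (l+1), a => if a / 2^l % 2 = 0 then 3*(a/2^(l+1)) else 1

def gm : ℕ → ℕ → ℕ
  | 0, b => 3*b
  | (l+1), b => if b / 2^l % 2 = 1 then 3*(b/2^(l+1)) else 2

lemma fmgm_zero (a b : ℕ) : fm 0 a = gm 0 b ↔ a = b := by
  simp only [fm, gm]; omega

lemma fmgm_succ (l a b : ℕ) :
    fm (l+1) a = gm (l+1) b ↔
      (a/2^l % 2 = 0 ∧ b/2^l % 2 = 1 ∧ a/2^(l+1) = b/2^(l+1)) := by
  simp only [fm, gm]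
  generalize a/2^l = p at *
  generalize b/2^l = q at *
  generalize a/2^(l+1) = x at *
  generalize b/2^(l+1) = y at *
  split_ifs with h1 h2 h2 <;> omega

lemma shift_iff (l' e a b : ℕ) :
    (fm (l'+1) (a + 2^(l'+1+e)) = gm (l'+1) (b + 2^(l'+1+e))) ↔ (fm (l'+1) a = gm (l'+1) b) := by
  rw [fmgm_succ, fmgm_succ]
  have h2l' : 0 < 2^l' := Nat.pow_pos (by norm_num)
  have h2l1 : 0 < 2^(l'+1) := Nat.pow_pos (by norm_num)
  have e1 : (2:ℕ)^(l'+1+e) = 2^l' * 2^(e+1) := by ring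
  have e2 : (2:ℕ)^(l'+1+e) = 2^(l'+1) * 2^e := by ring
  have hd1 : (a + 2^(l'+1+e))/2^l' = a/2^l' + 2^(e+1) := by
    rw [e1]; exact Nat.add_mul_div_left _ _ h2l'
  have hd1b : (b + 2^(l'+1+e))/2^l' = b/2^l' + 2^(e+1) := by
    rw [e1]; exact Nat.add_mul_div_left _ _ h2l'
  have hd2 : (a + 2^(l'+1+e))/2^(l'+1) = a/2^(l'+1) + 2^e := by
    rw [e2]; exact Nat.add_mul_div_left _ _ h2l1
  have hd2b : (b + 2^(l'+1+e))/2^(l'+1) = b/2^(l'+1) + 2^e := by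
    rw [e2]; exact Nat.add_mul_div_left _ _ h2l1
  rw [hd1, hd1b, hd2, hd2b]
  have hc : (2:ℕ)^(e+1) % 2 = 0 := by
    rw [pow_succ]; exact Nat.mul_mod_left _ _
  generalize a/2^l' = p
  generalize b/2^l' = q
  generalize a/2^(l'+1) = x
  generalize b/2^(l'+1) = y
  generalize (2:ℕ)^(e+1) = c at hc
  generalize (2:ℕ)^e = d
  omega

lemma countA (L : ℕ) : ∀ a b : ℕ, a < 2^L → b < 2^L →
    ((Finset.range (L+1)).filter (fun l => fm l a = gm l b)).card
      = if a ≤ b then 1 else 0 := by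
  induction L with
  | zero =>
    intro a b ha hb
    interval_cases a
    interval_cases b
    decide
  | succ L IH =>
    intro a b ha hb
    have h2L : (0:ℕ) < 2^L := Nat.pow_pos (by norm_num)
    have hpow : (2:ℕ)^(L+1) = 2^L * 2 := by ring
    set P : ℕ → Prop := fun l => fm l a = gm l b with hP
    have hcard : ((range (L+2)).filter P).card
        = ((range (L+1)).filter P).card + (if P (L+1) then 1 else 0) := by
      rw [Finset.range_add_one, Finset.filter_insert]
      split
      · rw [Finset.card_insert_of_notMem (fun h => by
          exact absurd (Finset.mem_range.mp (Finset.mem_filter.mp h).1) (lt_irrefl _))]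
      · simp
    rw [hcard]
    by_cases hA : a < 2^L <;> by_cases hB : b < 2^L
    · have hnm : ¬ P (L+1) := by
        rw [hP]; beta_reduce
        rw [fmgm_succ]
        rw [Nat.div_eq_of_lt hB]
        omega
      rw [if_neg hnm, IH a b hA hB]
      omega
    · push_neg at hB
      have hm : P (L+1) := by
        rw [hP]; beta_reduce; rw [fmgm_succ]
        have h1 : a / 2^L = 0 := Nat.div_eq_of_lt hA
        have h2 : b / 2^L = 1 := by
          have := Nat.le_div_iff_mul_le h2L (x := 1) (y := b)
          have := Nat.div_lt_iff_lt_mul h2L (x := b) (y := 2)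
          omega
        have h3 : a / 2^(L+1) = 0 := Nat.div_eq_of_lt ha
        have h4 : b / 2^(L+1) = 0 := Nat.div_eq_of_lt hb
        omega
      have hempty : (range (L+1)).filter P = ∅ := by
        rw [Finset.filter_eq_empty_iff]
        intro l hl
        rw [hP]; beta_reduce
        rcases l with _ | l'
        · rw [fmgm_zero]; omega
        · rw [fmgm_succ]
          have hl' : l' + 1 ≤ L := by
            have := Finset.mem_range.mp hl; omega
          have h2l1 : (0:ℕ) < 2^(l'+1) := Nat.pow_pos (by norm_num)
          have hmul : (2:ℕ)^(L-(l'+1)) * 2^(l'+1) = 2^L := by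
            rw [← pow_add]; congr 1; omega
          have hlt : a / 2^(l'+1) < 2^(L-(l'+1)) := by
            rw [Nat.div_lt_iff_lt_mul h2l1, hmul]; exact hA
          have hge : 2^(L-(l'+1)) ≤ b / 2^(l'+1) := by
            rw [Nat.le_div_iff_mul_le h2l1, hmul]; exact hB
          omega
      rw [if_pos hm, hempty, if_pos (le_trans (le_of_lt hA) hB)]
      simp
    · push_neg at hA
      have hnm : ¬ P (L+1) := by
        rw [hP]; beta_reduce; rw [fmgm_succ]
        have h2 : b / 2^L = 0 := Nat.div_eq_of_lt hB
        omega
      have hempty : (range (L+1)).filter P = ∅ := by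
        rw [Finset.filter_eq_empty_iff]
        intro l hl
        rw [hP]; beta_reduce
        rcases l with _ | l'
        · rw [fmgm_zero]; omega
        · rw [fmgm_succ]
          have hl' : l' + 1 ≤ L := by
            have := Finset.mem_range.mp hl; omega
          have h2l1 : (0:ℕ) < 2^(l'+1) := Nat.pow_pos (by norm_num)
          have hmul : (2:ℕ)^(L-(l'+1)) * 2^(l'+1) = 2^L := by
            rw [← pow_add]; congr 1; omega
          have hlt : b / 2^(l'+1) < 2^(L-(l'+1)) := by
            rw [Nat.div_lt_iff_lt_mul h2l1, hmul]; exact hB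
          have hge : 2^(L-(l'+1)) ≤ a / 2^(l'+1) := by
            rw [Nat.le_div_iff_mul_le h2l1, hmul]; exact hA
          omega
      rw [if_neg hnm, hempty, if_neg (by omega)]
      simp
    · push_neg at hA hB
      set a' := a - 2^L with ha'
      set b' := b - 2^L with hb'
      have haa : a = a' + 2^L := by omega
      have hbb : b = b' + 2^L := by omega
      have ha'lt : a' < 2^L := by omega
      have hb'lt : b' < 2^L := by omega
      have hnm : ¬ P (L+1) := by
        rw [hP]; beta_reduce; rw [fmgm_succ]
        have h1 : a / 2^L = 1 := by
          have := Nat.le_div_iff_mul_le h2L (x := 1) (y := a)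
          have := Nat.div_lt_iff_lt_mul h2L (x := a) (y := 2)
          omega
        omega
      have hfc : (range (L+1)).filter P = (range (L+1)).filter (fun l => fm l a' = gm l b') := by
        apply Finset.filter_congr
        intro l hl
        have hlL : l ≤ L := by have := Finset.mem_range.mp hl; omega
        rw [hP]; beta_reduce
        rcases l with _ | l'
        · rw [fmgm_zero, fmgm_zero]; constructor <;> intro h <;> omega
        · have he : L = l' + 1 + (L - l' - 1) := by omega
          rw [haa, hbb]
          rw [show (2:ℕ)^L = 2^(l'+1+(L-l'-1)) from by rw [← he]]
          rw [shift_iff]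
      rw [if_neg hnm, hfc, IH a' b' ha'lt hb'lt]
      have : a ≤ b ↔ a' ≤ b' := by omega
      rcases le_or_gt a b with h | h
      · rw [if_pos h, if_pos (this.mp h)]
      · rw [if_neg (by omega), if_neg (by omega)]

/-- Lemma `lem:blocktruncinfty`:
`‖𝒰_b(M)‖₂ ≤ (⌈log₂ m⌉ + 1) ‖M‖₂`. -/
theorem stmt_18 (n m : ℕ) (nb : ℕ → ℕ)
    (hnb0 : nb 0 = 0) (hnbm : nb m = n) (hmono : ∀ j < m, nb j < nb (j + 1))
    (M : Matrix (Fin n) (Fin n) ℝ) :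
    specNorm (triuB nb m M) ≤ ((⌈Real.logb 2 (m : ℝ)⌉ : ℝ) + 1) * specNorm M := by
  by_cases hn : n = 0
  · subst hn
    have hT : triuB nb m M = M := Subsingleton.elim _ _
    rw [hT]
    have hc : (0:ℝ) ≤ (⌈Real.logb 2 (m : ℝ)⌉ : ℝ) := by
      rcases Nat.eq_zero_or_pos m with rfl | hm
      · simp
      · have h1 : (0:ℝ) ≤ Real.logb 2 (m : ℝ) :=
          Real.logb_nonneg (by norm_num) (by exact_mod_cast hm)
        exact_mod_cast Int.ceil_nonneg h1
    nlinarith [specNorm_nonneg' M, mul_nonneg hc (specNorm_nonneg' M)]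
  · have hm : 0 < m := by
      rcases Nat.eq_zero_or_pos m with rfl | h
      · exact absurd (hnb0 ▸ hnbm).symm hn
      · exact h
    set L := Nat.clog 2 m with hL
    have hmL : m ≤ 2^L := Nat.le_pow_clog (by norm_num) m
    have hblock : ∀ i : Fin n, blockOf nb m i < 2^L := by
      intro i
      have h1 : blockOf nb m i ≤ m := Nat.findGreatest_le m
      have h2 : blockOf nb m i ≠ m := by
        intro h
        have h3 := (Nat.findGreatest_eq_iff.mp h).2.1 (Nat.pos_iff_ne_zero.mp hm)
        rw [hnbm] at h3
        exact absurd h3 (Nat.not_le.mpr i.2)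
      omega
    have hdec : triuB nb m M = ∑ l ∈ Finset.range (L+1),
        (Matrix.of fun i k =>
          if fm l (blockOf nb m i) = gm l (blockOf nb m k) then M i k else 0) := by
      ext i k
      rw [Matrix.sum_apply]
      simp only [triuB, Matrix.of_apply]
      have hsum : ∑ l ∈ Finset.range (L+1),
          (if fm l (blockOf nb m i) = gm l (blockOf nb m k) then M i k else 0)
          = ((Finset.range (L+1)).filter
              (fun l => fm l (blockOf nb m i) = gm l (blockOf nb m k))).card • M i k := by
        rw [Finset.sum_ite, Finset.sum_const, Finset.sum_const_zero, add_zero]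
      rw [hsum, countA L _ _ (hblock i) (hblock k)]
      by_cases h : blockOf nb m i ≤ blockOf nb m k
      · rw [if_pos h, if_pos h, one_smul]
      · rw [if_neg h, if_neg h, zero_smul]
    have hceil : ((⌈Real.logb 2 (m : ℝ)⌉ : ℤ) : ℝ) = (L : ℝ) := by
      have h1 : ⌈Real.logb 2 (m:ℝ)⌉ = Int.clog 2 (m:ℝ) := by
        have := Real.ceil_logb_natCast (b := 2) (r := (m:ℝ)) (Nat.cast_nonneg m)
        simpa using this
      rw [h1, Int.clog_natCast]
      simp
      exact hL.symm
    calc specNorm (triuB nb m M)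
        ≤ ∑ l ∈ Finset.range (L+1), specNorm
            (Matrix.of fun i k =>
              if fm l (blockOf nb m i) = gm l (blockOf nb m k) then M i k else 0) := by
          rw [hdec]; exact specNorm_sum_le _ _
      _ ≤ ∑ _l ∈ Finset.range (L+1), specNorm M :=
          Finset.sum_le_sum fun l _ =>
            specNorm_mask_le (fun i => fm l (blockOf nb m i)) (fun k => gm l (blockOf nb m k)) M
      _ = ((L:ℝ) + 1) * specNorm M := by
          rw [Finset.sum_const, Finset.card_range, nsmul_eq_mul]
          push_cast
          ring
      _ = ((⌈Real.logb 2 (m : ℝ)⌉ : ℝ) + 1) * specNorm M := by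
          rw [hceil]
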